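/- arXiv:2509.00196 — 2 statements merged into one kernel-verified Lean document; each statement's English description precedes it below -/
import Mathlib

section
/- Let B ∈ ℝ^{M×K}, A ∈ ℝ^{p×K}, Σ_Z ∈ ℝ^{K×K} symmetric positive definite, and suppose λ_min(B^T B) ≥ κ_{B,1}·M, λ_max(A^T A) ≤ κ_{A,2}·p, and λ_min(Σ_Z) ≥ κ_{Z,1} for positive constants κ_{B,1}, κ_{A,2}, κ_{Z,1}. Then the K-th largest eigenvalue of B(Σ_Z^{-1} + A^T A)^{-1}B^T is at least C·M/p, where C = κ_{B,1}/(κ_{A,2} + 1/(κ_{Z,1})) (for p ≥ 1). -/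
open Matrix

noncomputable def lmin {n : ℕ} {A : Matrix (Fin n) (Fin n) ℝ} (hA : A.IsHermitian) : ℝ :=
  ⨅ i, hA.eigenvalues i

noncomputable def lmax {n : ℕ} {A : Matrix (Fin n) (Fin n) ℝ} (hA : A.IsHermitian) : ℝ :=
  ⨆ i, hA.eigenvalues i

/-- `kthEig hA k` is the `k`-th largest eigenvalue (1-indexed) of the Hermitian
matrix `A`. -/
noncomputable def kthEig {n : ℕ} {A : Matrix (Fin n) (Fin n) ℝ} (hA : A.IsHermitian) (k : ℕ) : ℝ :=
  ((List.ofFn hA.eigenvalues).insertionSort (· ≥ ·)).getD (k - 1) 0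


private lemma dotShift {m n : ℕ} (Mx : Matrix (Fin m) (Fin n) ℝ) (a : Fin n → ℝ) (b : Fin m → ℝ) :
    (Mx *ᵥ a) ⬝ᵥ b = a ⬝ᵥ (Mxᵀ *ᵥ b) := by
  rw [dotProduct_comm, Matrix.dotProduct_mulVec, Matrix.mulVec_transpose,
    dotProduct_comm]

private lemma uddot {n : ℕ} (U : Matrix (Fin n) (Fin n) ℝ) (hU : Uᵀ * U = 1)
    (d e : Fin n → ℝ) (x y : Fin n → ℝ) :
    ((U * Matrix.diagonal d) *ᵥ x) ⬝ᵥ ((U * Matrix.diagonal e) *ᵥ y)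
      = ∑ i, d i * e i * (x i * y i) := by
  rw [← Matrix.mulVec_mulVec, dotShift, Matrix.mulVec_mulVec, ← Matrix.mul_assoc, hU, Matrix.one_mul]
  simp only [dotProduct, Matrix.mulVec_diagonal]
  exact Finset.sum_congr rfl fun i _ => by ring

private lemma hermU {n : ℕ} {H : Matrix (Fin n) (Fin n) ℝ} (hH : H.IsHermitian) :
    ∃ U : Matrix (Fin n) (Fin n) ℝ, Uᵀ * U = 1 ∧ U * Uᵀ = 1 ∧
      H = U * Matrix.diagonal hH.eigenvalues * Uᵀ := by
  refine ⟨(hH.eigenvectorUnitary : Matrix (Fin n) (Fin n) ℝ), ?_, ?_, ?_⟩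
  · rw [← Matrix.conjTranspose_eq_transpose_of_trivial]
    exact (Matrix.mem_unitaryGroup_iff').mp (hH.eigenvectorUnitary).2
  · rw [← Matrix.conjTranspose_eq_transpose_of_trivial]
    exact (Matrix.mem_unitaryGroup_iff).mp (hH.eigenvectorUnitary).2
  · rw [← Matrix.conjTranspose_eq_transpose_of_trivial]
    have := hH.spectral_theorem
    simpa [Matrix.star_eq_conjTranspose] using this

private lemma qform_eq {n : ℕ} {H U : Matrix (Fin n) (Fin n) ℝ} {d : Fin n → ℝ}
    (hU1 : Uᵀ * U = 1) (hspec : H = U * Matrix.diagonal d * Uᵀ)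
    (x : Fin n → ℝ) :
    (H *ᵥ (U *ᵥ x)) ⬝ᵥ (U *ᵥ x) = ∑ i, d i * x i ^ 2 := by
  have h1 : H *ᵥ (U *ᵥ x) = (U * Matrix.diagonal d) *ᵥ x := by
    rw [hspec, Matrix.mulVec_mulVec, Matrix.mul_assoc (U * Matrix.diagonal d),
      hU1, Matrix.mul_one]
  have h2 : U *ᵥ x = (U * Matrix.diagonal (fun _ : Fin n => (1:ℝ))) *ᵥ x := by
    rw [Matrix.diagonal_one, Matrix.mul_one]
  rw [h1, h2, uddot U hU1]
  exact Finset.sum_congr rfl fun i _ => by ring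

private lemma parseval_eq {n : ℕ} {U : Matrix (Fin n) (Fin n) ℝ}
    (hU1 : Uᵀ * U = 1) (x : Fin n → ℝ) :
    (U *ᵥ x) ⬝ᵥ (U *ᵥ x) = ∑ i, x i ^ 2 := by
  have h2 : U *ᵥ x = (U * Matrix.diagonal (fun _ : Fin n => (1:ℝ))) *ᵥ x := by
    rw [Matrix.diagonal_one, Matrix.mul_one]
  rw [h2, uddot U hU1]
  exact Finset.sum_congr rfl fun i _ => by ring

private lemma imagesq_eq {n : ℕ} {H U : Matrix (Fin n) (Fin n) ℝ} {d : Fin n → ℝ}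
    (hU1 : Uᵀ * U = 1) (hspec : H = U * Matrix.diagonal d * Uᵀ)
    (x : Fin n → ℝ) :
    (H *ᵥ (U *ᵥ x)) ⬝ᵥ (H *ᵥ (U *ᵥ x)) = ∑ i, d i ^ 2 * x i ^ 2 := by
  have h1 : H *ᵥ (U *ᵥ x) = (U * Matrix.diagonal d) *ᵥ x := by
    rw [hspec, Matrix.mulVec_mulVec, Matrix.mul_assoc (U * Matrix.diagonal d),
      hU1, Matrix.mul_one]
  rw [h1, uddot U hU1]
  exact Finset.sum_congr rfl fun i _ => by ring

private lemma inv_spec {n : ℕ} {H U : Matrix (Fin n) (Fin n) ℝ} {d : Fin n → ℝ}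
    (hU1 : Uᵀ * U = 1) (hU2 : U * Uᵀ = 1)
    (hspec : H = U * Matrix.diagonal d * Uᵀ) (hd : ∀ i, d i ≠ 0) :
    H⁻¹ = U * Matrix.diagonal (fun i => (d i)⁻¹) * Uᵀ := by
  apply Matrix.inv_eq_right_inv
  rw [hspec]
  calc U * Matrix.diagonal d * Uᵀ * (U * Matrix.diagonal (fun i => (d i)⁻¹) * Uᵀ)
      = U * (Matrix.diagonal d * ((Uᵀ * U) * (Matrix.diagonal (fun i => (d i)⁻¹) * Uᵀ))) := by
        simp only [Matrix.mul_assoc]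
    _ = 1 := by
        rw [hU1, Matrix.one_mul, ← Matrix.mul_assoc (Matrix.diagonal d) _ _, Matrix.diagonal_mul_diagonal]
        have : (fun i => d i * (d i)⁻¹) = fun _ : Fin n => (1:ℝ) := by
          funext i; exact mul_inv_cancel₀ (hd i)
        rw [this, Matrix.diagonal_one, Matrix.one_mul, hU2]

private lemma surj_U {n : ℕ} {U : Matrix (Fin n) (Fin n) ℝ} (hU2 : U * Uᵀ = 1)
    (v : Fin n → ℝ) : U *ᵥ (Uᵀ *ᵥ v) = v := by
  rw [Matrix.mulVec_mulVec, hU2, Matrix.one_mulVec]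

private lemma dot_self_nonneg' {n : ℕ} (v : Fin n → ℝ) : 0 ≤ v ⬝ᵥ v :=
  Finset.sum_nonneg fun i _ => mul_self_nonneg _

private lemma single_sq {n : ℕ} (i : Fin n) : ∑ j, (Pi.single i (1:ℝ) : Fin n → ℝ) j ^ 2 = 1 := by
  classical
  rw [Finset.sum_eq_single i]
  · simp
  · intro j _ hj; rw [Pi.single_eq_of_ne hj]; ring
  · intro h; exact absurd (Finset.mem_univ i) h

private lemma single_wt {n : ℕ} (d : Fin n → ℝ) (i : Fin n) :
    ∑ j, d j * (Pi.single i (1:ℝ) : Fin n → ℝ) j ^ 2 = d i := by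
  classical
  rw [Finset.sum_eq_single i]
  · simp
  · intro j _ hj; rw [Pi.single_eq_of_ne hj]; ring
  · intro h; exact absurd (Finset.mem_univ i) h

/-- each eigenvalue is a quadratic-form value at a unit vector -/
private lemma eigen_le_of_q {n : ℕ} {H : Matrix (Fin n) (Fin n) ℝ} (hH : H.IsHermitian)
    {t : ℝ} (hq : ∀ v, (H *ᵥ v) ⬝ᵥ v ≤ t * (v ⬝ᵥ v)) (i : Fin n) : hH.eigenvalues i ≤ t := by
  obtain ⟨U, hU1, hU2, hspec⟩ := hermU hH
  have h := hq (U *ᵥ Pi.single i 1)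
  rw [qform_eq hU1 hspec, parseval_eq hU1, single_sq, single_wt] at h
  linarith

private lemma eigen_ge_of_q {n : ℕ} {H : Matrix (Fin n) (Fin n) ℝ} (hH : H.IsHermitian)
    {s : ℝ} (hq : ∀ v, s * (v ⬝ᵥ v) ≤ (H *ᵥ v) ⬝ᵥ v) (i : Fin n) : s ≤ hH.eigenvalues i := by
  obtain ⟨U, hU1, hU2, hspec⟩ := hermU hH
  have h := hq (U *ᵥ Pi.single i 1)
  rw [qform_eq hU1 hspec, parseval_eq hU1, single_sq, single_wt] at h
  linarith

private lemma countP_ofFn : ∀ {M : ℕ} (f : Fin M → ℝ) (p : ℝ → Bool),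
    (List.ofFn f).countP p = (Finset.univ.filter fun i => p (f i)).card := by
  intro M
  induction M with
  | zero => intro f p; simp
  | succ m ih =>
    intro f p
    rw [List.ofFn_succ, List.countP_cons, ih]
    have h1 : ((Finset.univ.filter fun i => p (f i)).card : ℕ)
        = ∑ i : Fin (m+1), if p (f i) then 1 else 0 := by
      rw [Finset.card_filter]
    have h2 : ((Finset.univ.filter fun i : Fin m => p (f i.succ)).card : ℕ)
        = ∑ i : Fin m, if p (f i.succ) then 1 else 0 := by
      rw [Finset.card_filter]
    rw [h1, h2, Fin.sum_univ_succ]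
    simp [Function.comp]
    omega

private lemma count_big {M K : ℕ} {H : Matrix (Fin M) (Fin M) ℝ} (hH : H.IsHermitian)
    (c : ℝ) (V : Submodule ℝ (Fin M → ℝ)) (hVdim : K ≤ Module.finrank ℝ V)
    (hq : ∀ v ∈ V, c * (v ⬝ᵥ v) ≤ (H *ᵥ v) ⬝ᵥ v) :
    K ≤ (Finset.univ.filter fun i => c ≤ hH.eigenvalues i).card := by
  classical
  by_contra hcon
  push_neg at hcon
  obtain ⟨U, hU1, hU2, hspec⟩ := hermU hH
  set T : Finset (Fin M) := Finset.univ.filter fun i => c ≤ hH.eigenvalues i with hT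
  set Tc : Finset (Fin M) := Finset.univ.filter fun i => ¬ c ≤ hH.eigenvalues i with hTc
  have hTT : T.card + Tc.card = M := by
    rw [hT, hTc]
    rw [Finset.card_filter_add_card_filter_not]
    simp
  let e : (Fin M → ℝ) ≃ₗ[ℝ] (Fin M → ℝ) :=
    LinearEquiv.ofLinear (Matrix.mulVecLin U) (Matrix.mulVecLin Uᵀ)
      (by rw [← Matrix.mulVecLin_mul, hU2, Matrix.mulVecLin_one])
      (by rw [← Matrix.mulVecLin_mul, hU1, Matrix.mulVecLin_one])
  let W0 : Submodule ℝ (Fin M → ℝ) :=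
    Submodule.span ℝ (Set.range fun i : {x : Fin M // x ∈ Tc} => (Pi.single (i : Fin M) (1:ℝ) : Fin M → ℝ))
  have hW0li : LinearIndependent ℝ fun i : {x : Fin M // x ∈ Tc} => (Pi.single (i : Fin M) (1:ℝ) : Fin M → ℝ) := by
    have h := (Pi.basisFun ℝ (Fin M)).linearIndependent.comp
      (fun i : {x : Fin M // x ∈ Tc} => (i : Fin M)) Subtype.val_injective
    have heq : (⇑(Pi.basisFun ℝ (Fin M)) ∘ fun i : {x : Fin M // x ∈ Tc} => (i : Fin M))
        = fun i : {x : Fin M // x ∈ Tc} => (Pi.single (i : Fin M) (1:ℝ) : Fin M → ℝ) := by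
      funext i; simp [Function.comp]
    rwa [heq] at h
  have hW0dim : Module.finrank ℝ W0 = Tc.card := by
    rw [finrank_span_eq_card hW0li]
    simp [Fintype.card_coe]
  have hW0supp : ∀ x ∈ W0, ∀ i : Fin M, i ∉ Tc → x i = 0 := by
    intro x hx
    induction hx using Submodule.span_induction with
    | mem y hy =>
      obtain ⟨j, rfl⟩ := hy
      intro i hi
      have hij : i ≠ (j : Fin M) := by
        rintro rfl; exact hi j.2
      exact Pi.single_eq_of_ne hij 1
    | zero => intro i _; rfl
    | add y z _ _ hy hz => intro i hi; simp [Pi.add_apply, hy i hi, hz i hi]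
    | smul a y _ hy => intro i hi; simp [Pi.smul_apply, hy i hi]
  set W : Submodule ℝ (Fin M → ℝ) := W0.map e.toLinearMap with hW
  have hWdim : Module.finrank ℝ W = Tc.card := by
    rw [hW, LinearEquiv.finrank_map_eq e W0, hW0dim]
  have hsup : Module.finrank ℝ (V ⊔ W : Submodule ℝ (Fin M → ℝ)) ≤ M := by
    have := Submodule.finrank_le (V ⊔ W : Submodule ℝ (Fin M → ℝ))
    simpa [Module.finrank_pi] using this
  have hkey := Submodule.finrank_sup_add_finrank_inf_eq V W
  have hpos : 0 < Module.finrank ℝ (V ⊓ W : Submodule ℝ (Fin M → ℝ)) := by omega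
  have : Nontrivial (V ⊓ W : Submodule ℝ (Fin M → ℝ)) := Module.nontrivial_of_finrank_pos hpos
  obtain ⟨y, hy0⟩ := exists_ne (0 : (V ⊓ W : Submodule ℝ (Fin M → ℝ)))
  set v : Fin M → ℝ := (y : Fin M → ℝ) with hv
  have hvV : v ∈ V := y.2.1
  have hvW : v ∈ W := y.2.2
  have hvne : v ≠ 0 := by
    intro h
    apply hy0
    exact Subtype.ext h
  obtain ⟨x, hxW0, hxv⟩ := Submodule.mem_map.mp hvW
  have hvx : v = U *ᵥ x := by rw [← hxv]; rfl
  have hxne : x ≠ 0 := by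
    intro h; apply hvne; rw [hvx, h, Matrix.mulVec_zero]
  obtain ⟨i0, hi0⟩ : ∃ i, x i ≠ 0 := by
    by_contra hco; push_neg at hco; exact hxne (funext hco)
  have hi0Tc : i0 ∈ Tc := by
    by_contra hco; exact hi0 (hW0supp x hxW0 i0 hco)
  -- quadratic form strict inequality
  have hlt : ∑ i, hH.eigenvalues i * x i ^ 2 < ∑ i, c * x i ^ 2 := by
    apply Finset.sum_lt_sum
    · intro i _
      by_cases hxi : x i = 0
      · rw [hxi]; ring_nf; exact le_refl _
      · have hiTc : i ∈ Tc := by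
          by_contra hco; exact hxi (hW0supp x hxW0 i hco)
        have : ¬ c ≤ hH.eigenvalues i := by
          rw [hTc] at hiTc; simpa using hiTc
        nlinarith [sq_nonneg (x i)]
    · refine ⟨i0, Finset.mem_univ i0, ?_⟩
      have : ¬ c ≤ hH.eigenvalues i0 := by
        rw [hTc] at hi0Tc; simpa using hi0Tc
      have hx2 : 0 < x i0 ^ 2 := by positivity
      nlinarith
  have hge := hq v hvV
  rw [hvx, qform_eq hU1 hspec, parseval_eq hU1] at hge
  rw [← Finset.mul_sum] at hlt
  linarith

private lemma qform_le_of_eigen_le {n : ℕ} {H : Matrix (Fin n) (Fin n) ℝ}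
    (hH : H.IsHermitian) {t : ℝ} (h : ∀ i, hH.eigenvalues i ≤ t) (v : Fin n → ℝ) :
    (H *ᵥ v) ⬝ᵥ v ≤ t * (v ⬝ᵥ v) := by
  obtain ⟨U, hU1, hU2, hspec⟩ := hermU hH
  have hv : v = U *ᵥ (Uᵀ *ᵥ v) := (surj_U hU2 v).symm
  rw [hv, qform_eq hU1 hspec, parseval_eq hU1, Finset.mul_sum]
  exact Finset.sum_le_sum fun i _ => by nlinarith [sq_nonneg ((Uᵀ *ᵥ v) i), h i]

private lemma qform_ge_of_eigen_ge {n : ℕ} {H : Matrix (Fin n) (Fin n) ℝ}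
    (hH : H.IsHermitian) {s : ℝ} (h : ∀ i, s ≤ hH.eigenvalues i) (v : Fin n → ℝ) :
    s * (v ⬝ᵥ v) ≤ (H *ᵥ v) ⬝ᵥ v := by
  obtain ⟨U, hU1, hU2, hspec⟩ := hermU hH
  have hv : v = U *ᵥ (Uᵀ *ᵥ v) := (surj_U hU2 v).symm
  rw [hv, qform_eq hU1 hspec, parseval_eq hU1, Finset.mul_sum]
  exact Finset.sum_le_sum fun i _ => by nlinarith [sq_nonneg ((Uᵀ *ᵥ v) i), h i]

private lemma eigen_pos_of_q {n : ℕ} {H : Matrix (Fin n) (Fin n) ℝ} (hH : H.IsHermitian)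
    (hq : ∀ v, v ≠ 0 → 0 < (H *ᵥ v) ⬝ᵥ v) (i : Fin n) : 0 < hH.eigenvalues i := by
  obtain ⟨U, hU1, hU2, hspec⟩ := hermU hH
  have hne : U *ᵥ Pi.single i 1 ≠ 0 := by
    intro h0
    have := parseval_eq hU1 (Pi.single i (1:ℝ))
    rw [h0, single_sq] at this
    simp at this
  have h := hq (U *ᵥ Pi.single i 1) hne
  rw [qform_eq hU1 hspec, single_wt] at h
  exact h

private lemma inv_qform_ge_of_eigen_le {n : ℕ} {H : Matrix (Fin n) (Fin n) ℝ}
    (hH : H.IsHermitian) {t : ℝ} (hpos : ∀ i, 0 < hH.eigenvalues i)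
    (h : ∀ i, hH.eigenvalues i ≤ t) (v : Fin n → ℝ) :
    t⁻¹ * (v ⬝ᵥ v) ≤ (H⁻¹ *ᵥ v) ⬝ᵥ v := by
  obtain ⟨U, hU1, hU2, hspec⟩ := hermU hH
  have hinv : H⁻¹ = U * Matrix.diagonal (fun i => (hH.eigenvalues i)⁻¹) * Uᵀ :=
    inv_spec hU1 hU2 hspec fun i => ne_of_gt (hpos i)
  have hv : v = U *ᵥ (Uᵀ *ᵥ v) := (surj_U hU2 v).symm
  rw [hv, qform_eq hU1 hinv, parseval_eq hU1, Finset.mul_sum]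
  refine Finset.sum_le_sum fun i _ => ?_
  have h1 : t⁻¹ ≤ (hH.eigenvalues i)⁻¹ := inv_anti₀ (hpos i) (h i)
  nlinarith [sq_nonneg ((Uᵀ *ᵥ v) i)]

private lemma inv_qform_le_of_eigen_ge {n : ℕ} {H : Matrix (Fin n) (Fin n) ℝ}
    (hH : H.IsHermitian) {s : ℝ} (hs : 0 < s)
    (h : ∀ i, s ≤ hH.eigenvalues i) (v : Fin n → ℝ) :
    (H⁻¹ *ᵥ v) ⬝ᵥ v ≤ s⁻¹ * (v ⬝ᵥ v) := by
  obtain ⟨U, hU1, hU2, hspec⟩ := hermU hH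
  have hinv : H⁻¹ = U * Matrix.diagonal (fun i => (hH.eigenvalues i)⁻¹) * Uᵀ :=
    inv_spec hU1 hU2 hspec fun i => ne_of_gt (lt_of_lt_of_le hs (h i))
  have hv : v = U *ᵥ (Uᵀ *ᵥ v) := (surj_U hU2 v).symm
  rw [hv, qform_eq hU1 hinv, parseval_eq hU1, Finset.mul_sum]
  refine Finset.sum_le_sum fun i _ => ?_
  have h1 : (hH.eigenvalues i)⁻¹ ≤ s⁻¹ := inv_anti₀ hs (h i)
  nlinarith [sq_nonneg ((Uᵀ *ᵥ v) i)]

private lemma imagesq_ge {n : ℕ} {H : Matrix (Fin n) (Fin n) ℝ} (hH : H.IsHermitian)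
    {b : ℝ} (hb : 0 ≤ b) (h : ∀ i, b ≤ hH.eigenvalues i) (u : Fin n → ℝ) :
    b * ((H *ᵥ u) ⬝ᵥ u) ≤ (H *ᵥ u) ⬝ᵥ (H *ᵥ u) := by
  obtain ⟨U, hU1, hU2, hspec⟩ := hermU hH
  have hu : u = U *ᵥ (Uᵀ *ᵥ u) := (surj_U hU2 u).symm
  rw [hu, qform_eq hU1 hspec, imagesq_eq hU1 hspec, Finset.mul_sum]
  refine Finset.sum_le_sum fun i _ => ?_
  have h1 := h i
  have h0 : 0 ≤ hH.eigenvalues i := le_trans hb h1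
  have h2 : b * hH.eigenvalues i ≤ hH.eigenvalues i * hH.eigenvalues i :=
    mul_le_mul_of_nonneg_right h1 h0
  nlinarith [sq_nonneg ((Uᵀ *ᵥ u) i)]

private lemma sorted_getD {M : ℕ} (f : Fin M → ℝ) (c : ℝ) (K : ℕ) (hK : 0 < K)
    (hcount : K ≤ ((List.ofFn f).countP fun x => decide (c ≤ x))) :
    c ≤ ((List.ofFn f).insertionSort (· ≥ ·)).getD (K-1) 0 := by
  classical
  set l := (List.ofFn f).insertionSort (· ≥ ·) with hl
  have hperm : l.Perm (List.ofFn f) := List.perm_insertionSort _ _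
  have hsorted : l.Pairwise (· ≥ ·) := List.pairwise_insertionSort _ _
  have hcl : K ≤ l.countP fun x => decide (c ≤ x) := by
    rwa [hperm.countP_eq]
  have hlen : K ≤ l.length := le_trans hcl List.countP_le_length
  have hKlt : K - 1 < l.length := by omega
  rw [List.getD_eq_getElem l 0 hKlt]
  by_contra hcon
  push_neg at hcon
  -- all entries from index K-1 on are < c
  have hdrop : ∀ a ∈ l.drop (K-1), ¬ (c ≤ a) := by
    intro a ha
    obtain ⟨j, hj, rfl⟩ := List.mem_iff_getElem.mp ha
    have hjl : K - 1 + j < l.length := by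
      have := @List.length_drop _ (K-1) l
      omega
    rw [List.getElem_drop]
    have : l[K-1+j]'hjl ≤ l[K-1] := by
      rcases Nat.eq_zero_or_pos j with h0 | h0
      · subst h0; simp
      · exact List.pairwise_iff_getElem.mp hsorted _ _ _ _ (by omega)
    intro hc
    exact absurd (le_trans hc this) (not_le.mpr hcon)
  have hcd : (l.drop (K-1)).countP (fun x => decide (c ≤ x)) = 0 := by
    rw [List.countP_eq_zero]
    intro a ha
    simpa using hdrop a ha
  have hsplit : l.countP (fun x => decide (c ≤ x))
      = (l.take (K-1)).countP (fun x => decide (c ≤ x))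
        + (l.drop (K-1)).countP (fun x => decide (c ≤ x)) := by
    rw [← List.countP_append, List.take_append_drop]
  have htake : (l.take (K-1)).countP (fun x => decide (c ≤ x)) ≤ K - 1 := by
    calc (l.take (K-1)).countP (fun x => decide (c ≤ x)) ≤ (l.take (K-1)).length :=
          List.countP_le_length
      _ ≤ K - 1 := by rw [List.length_take]; omega
  omega

/-- Under pervasiveness-type bounds, the `K`-th largest eigenvalue of
`B (Σ_Z⁻¹ + AᵀA)⁻¹ Bᵀ` is at least `C·M/p` with `C = κ_{B,1}/(κ_{A,2} + 1/κ_{Z,1})`. -/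
theorem kth_eigenvalue_lower_bound {M K p : ℕ} (hp : 0 < p) (hK : 0 < K)
    (B : Matrix (Fin M) (Fin K) ℝ) (A : Matrix (Fin p) (Fin K) ℝ)
    (SZ : Matrix (Fin K) (Fin K) ℝ) (hSZ : SZ.PosDef) (hSZh : SZ.IsHermitian)
    (κB1 κA2 κZ1 : ℝ) (hκB1 : 0 < κB1) (hκA2 : 0 < κA2) (hκZ1 : 0 < κZ1)
    (hBtB : (Bᵀ * B).IsHermitian)
    (hAtA : (Aᵀ * A).IsHermitian)
    (hSig : (B * (SZ⁻¹ + Aᵀ * A)⁻¹ * Bᵀ).IsHermitian)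
    (hB : κB1 * M ≤ lmin hBtB)
    (hA : lmax hAtA ≤ κA2 * p)
    (hZ : κZ1 ≤ lmin hSZh) :
    (κB1 / (κA2 + 1 / κZ1)) * M / p ≤ kthEig hSig K := by
  classical
  haveI : Nonempty (Fin K) := ⟨⟨0, hK⟩⟩
  rcases Nat.eq_zero_or_pos M with hM0 | hM0
  · subst hM0
    have h0 : kthEig hSig K = 0 := by
      unfold kthEig
      simp
    rw [h0]
    simp
  -- main case
  have hp1 : (1:ℝ) ≤ (p:ℝ) := by exact_mod_cast hp
  have hMpos : (0:ℝ) < (M:ℝ) := by exact_mod_cast hM0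
  set t : ℝ := (κA2 + 1/κZ1) * p with ht
  have ht0 : 0 < t := by positivity
  set b : ℝ := κB1 * M with hb
  have hb0 : 0 < b := by positivity
  set c : ℝ := b / t with hc
  have hc0 : 0 < c := by positivity
  -- eigenvalue bounds for SZ
  have hSZeig : ∀ i, κZ1 ≤ hSZh.eigenvalues i := fun i =>
    le_trans hZ (ciInf_le (Set.Finite.bddBelow (Set.finite_range _)) i)
  -- eigenvalue bounds for AᵀA
  have hAeig : ∀ i, hAtA.eigenvalues i ≤ κA2 * p := fun i =>
    le_trans (le_ciSup (Set.Finite.bddAbove (Set.finite_range _)) i) hA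
  -- eigenvalue bounds for BᵀB
  have hBeig : ∀ i, b ≤ hBtB.eigenvalues i := fun i =>
    le_trans hB (ciInf_le (Set.Finite.bddBelow (Set.finite_range _)) i)
  -- quadratic form bounds
  have hSZinvq : ∀ v : Fin K → ℝ, (SZ⁻¹ *ᵥ v) ⬝ᵥ v ≤ κZ1⁻¹ * (v ⬝ᵥ v) :=
    inv_qform_le_of_eigen_ge hSZh hκZ1 hSZeig
  have hAq : ∀ v : Fin K → ℝ, ((Aᵀ * A) *ᵥ v) ⬝ᵥ v ≤ (κA2 * p) * (v ⬝ᵥ v) :=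
    qform_le_of_eigen_le hAtA hAeig
  set S : Matrix (Fin K) (Fin K) ℝ := SZ⁻¹ + Aᵀ * A with hSdef
  have hS : S.IsHermitian := hSZh.inv.add hAtA
  have hSq : ∀ v : Fin K → ℝ, (S *ᵥ v) ⬝ᵥ v = (SZ⁻¹ *ᵥ v) ⬝ᵥ v + ((Aᵀ * A) *ᵥ v) ⬝ᵥ v := by
    intro v
    rw [hSdef, Matrix.add_mulVec, add_dotProduct]
  -- upper bound on eigenvalues of S
  have hSup : ∀ v : Fin K → ℝ, (S *ᵥ v) ⬝ᵥ v ≤ t * (v ⬝ᵥ v) := by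
    intro v
    have h1 := hSZinvq v
    have h2 := hAq v
    have h3 : κZ1⁻¹ + κA2 * p ≤ t := by
      rw [ht, one_div]
      have h4 : κZ1⁻¹ * 1 ≤ κZ1⁻¹ * p :=
        mul_le_mul_of_nonneg_left hp1 (le_of_lt (inv_pos.mpr hκZ1))
      nlinarith
    have hv0 := dot_self_nonneg' v
    rw [hSq v]
    nlinarith
  have hSeig_le : ∀ i, hS.eigenvalues i ≤ t := eigen_le_of_q hS hSup
  -- positivity of eigenvalues of S
  have hSZipd : (SZ⁻¹).PosDef := (Matrix.posDef_inv_iff).mpr hSZ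
  have hSpos : ∀ v : Fin K → ℝ, v ≠ 0 → 0 < (S *ᵥ v) ⬝ᵥ v := by
    intro v hv
    have h1 : 0 < (SZ⁻¹ *ᵥ v) ⬝ᵥ v := by
      have := hSZipd.dotProduct_mulVec_pos hv
      simpa [dotProduct_comm] using this
    have h2 : 0 ≤ ((Aᵀ * A) *ᵥ v) ⬝ᵥ v := by
      have heq : ((Aᵀ * A) *ᵥ v) ⬝ᵥ v = (A *ᵥ v) ⬝ᵥ (A *ᵥ v) := by
        rw [← Matrix.mulVec_mulVec, dotShift, Matrix.transpose_transpose]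
      rw [heq]
      exact dot_self_nonneg' _
    rw [hSq v]
    linarith
  have hSeig_pos : ∀ i, 0 < hS.eigenvalues i := eigen_pos_of_q hS hSpos
  have hSinvq : ∀ v : Fin K → ℝ, t⁻¹ * (v ⬝ᵥ v) ≤ (S⁻¹ *ᵥ v) ⬝ᵥ v :=
    inv_qform_ge_of_eigen_le hS hSeig_pos hSeig_le
  -- rank of B
  have hdet : (Bᵀ * B).det ≠ 0 := by
    have h := hBtB.det_eq_prod_eigenvalues
    have hprod : (0:ℝ) < ∏ i, hBtB.eigenvalues i :=
      Finset.prod_pos fun i _ => lt_of_lt_of_le hb0 (hBeig i)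
    rw [h]
    exact ne_of_gt hprod
  have hGunit : IsUnit (Bᵀ * B) := (Matrix.isUnit_iff_isUnit_det _).mpr (isUnit_iff_ne_zero.mpr hdet)
  have hrank : B.rank = K := by
    rw [← Matrix.rank_transpose_mul_self, Matrix.rank_of_isUnit _ hGunit, Fintype.card_fin]
  set V : Submodule ℝ (Fin M → ℝ) := LinearMap.range B.mulVecLin with hV
  have hVdim : K ≤ Module.finrank ℝ V := by
    rw [← hrank]
    rfl
  -- quadratic form bound on V
  have hq : ∀ v ∈ V, c * (v ⬝ᵥ v) ≤ ((B * S⁻¹ * Bᵀ) *ᵥ v) ⬝ᵥ v := by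
    rintro v ⟨u, rfl⟩
    simp only [Matrix.mulVecLin_apply]
    have key : ((B * S⁻¹ * Bᵀ) *ᵥ (B *ᵥ u)) ⬝ᵥ (B *ᵥ u)
        = (S⁻¹ *ᵥ ((Bᵀ * B) *ᵥ u)) ⬝ᵥ ((Bᵀ * B) *ᵥ u) := by
      calc ((B * S⁻¹ * Bᵀ) *ᵥ (B *ᵥ u)) ⬝ᵥ (B *ᵥ u)
          = (B *ᵥ ((S⁻¹ * (Bᵀ * B)) *ᵥ u)) ⬝ᵥ (B *ᵥ u) := by
            simp only [Matrix.mulVec_mulVec, Matrix.mul_assoc]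
        _ = ((S⁻¹ * (Bᵀ * B)) *ᵥ u) ⬝ᵥ (Bᵀ *ᵥ (B *ᵥ u)) := dotShift _ _ _
        _ = (S⁻¹ *ᵥ ((Bᵀ * B) *ᵥ u)) ⬝ᵥ ((Bᵀ * B) *ᵥ u) := by
            simp only [Matrix.mulVec_mulVec]
    have heq3 : (B *ᵥ u) ⬝ᵥ (B *ᵥ u) = ((Bᵀ * B) *ᵥ u) ⬝ᵥ u := by
      rw [dotShift, Matrix.mulVec_mulVec, dotProduct_comm]
    have h1 : t⁻¹ * (((Bᵀ * B) *ᵥ u) ⬝ᵥ ((Bᵀ * B) *ᵥ u))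
        ≤ (S⁻¹ *ᵥ ((Bᵀ * B) *ᵥ u)) ⬝ᵥ ((Bᵀ * B) *ᵥ u) := hSinvq _
    have h3 : b * (((Bᵀ * B) *ᵥ u) ⬝ᵥ u) ≤ ((Bᵀ * B) *ᵥ u) ⬝ᵥ ((Bᵀ * B) *ᵥ u) :=
      imagesq_ge hBtB (le_of_lt hb0) hBeig u
    have h4 : t⁻¹ * (b * (((Bᵀ * B) *ᵥ u) ⬝ᵥ u))
        ≤ t⁻¹ * (((Bᵀ * B) *ᵥ u) ⬝ᵥ ((Bᵀ * B) *ᵥ u)) :=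
      mul_le_mul_of_nonneg_left h3 (le_of_lt (inv_pos.mpr ht0))
    have h5 : c * ((B *ᵥ u) ⬝ᵥ (B *ᵥ u)) = t⁻¹ * (b * (((Bᵀ * B) *ᵥ u) ⬝ᵥ u)) := by
      rw [heq3, hc]
      field_simp
    rw [key, h5]
    linarith
  -- counting
  have hcount := count_big hSig c V hVdim hq
  have hcountP : K ≤ ((List.ofFn hSig.eigenvalues).countP fun x => decide (c ≤ x)) := by
    rw [countP_ofFn]
    simpa only [decide_eq_true_eq] using hcount
  have hfinal := sorted_getD hSig.eigenvalues c K hK hcountP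
  have hle : (κB1 / (κA2 + 1 / κZ1)) * M / p = c := by
    have hA0 : κA2 + 1 / κZ1 ≠ 0 := by positivity
    have hp0 : (p:ℝ) ≠ 0 := by positivity
    rw [hc, hb, ht]
    field_simp
  exact le_trans (le_of_eq hle) hfinal
end

section
/- Let B ∈ ℝ^{M×K}, A ∈ ℝ^{p×K}, and Σ_Z ∈ ℝ^{K×K} symmetric positive definite. Let B_m denote the m-th row of B with ‖B_m‖₂ ≤ C₄, and suppose λ_min(A^T A) ≥ κ_{A,1}·p, λ_max(A^T A) ≤ κ_{A,2}·p, and λ_max(Σ_Z) ≤ κ_{Z,2}. Then ‖B_m Σ_Z A^T (A Σ_Z A^T + I_p)^{-1}‖₂² ≤ C₄²·κ_{A,2}·p / (1/κ_{Z,2} + κ_{A,1}·p)², so this quantity is O(1/p). -/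
open Matrix

noncomputable def l2norm {n : ℕ} (v : Fin n → ℝ) : ℝ := Real.sqrt (∑ i, (v i) ^ 2)

section helpers

variable {n : ℕ}

/-- Spectral decomposition of a real quadratic form. -/
lemma spectral_decomp {H : Matrix (Fin n) (Fin n) ℝ} (hH : H.IsHermitian) (x : Fin n → ℝ) :
    ∃ c : Fin n → ℝ, x ⬝ᵥ H *ᵥ x = ∑ i, hH.eigenvalues i * c i ^ 2 ∧ x ⬝ᵥ x = ∑ i, c i ^ 2 := by
  set U : Matrix (Fin n) (Fin n) ℝ := (hH.eigenvectorUnitary : Matrix (Fin n) (Fin n) ℝ) with hU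
  have hUU : U * star U = 1 := (Matrix.mem_unitaryGroup_iff).mp hH.eigenvectorUnitary.2
  have hsU : star U = Uᵀ := by
    rw [Matrix.star_eq_conjTranspose, Matrix.conjTranspose_eq_transpose_of_trivial]
  have hUUt : U * Uᵀ = 1 := by rw [← hsU]; exact hUU
  refine ⟨x ᵥ* U, ?_, ?_⟩
  · conv_lhs => rw [hH.spectral_theorem, Unitary.conjStarAlgAut_apply]
    rw [hsU, ← Matrix.mulVec_mulVec, ← Matrix.mulVec_mulVec, Matrix.mulVec_transpose,
      Matrix.dotProduct_mulVec]
    simp only [RCLike.ofReal_real_eq_id, Function.id_comp]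
    simp only [dotProduct, Matrix.mulVec_diagonal]
    exact Finset.sum_congr rfl fun i _ => by ring
  · symm
    calc ∑ i, (x ᵥ* U) i ^ 2 = (x ᵥ* U) ⬝ᵥ (x ᵥ* U) := by
          simp [dotProduct, sq]
      _ = (x ᵥ* U) ⬝ᵥ (Uᵀ *ᵥ x) := by rw [Matrix.mulVec_transpose]
      _ = ((x ᵥ* U) ᵥ* Uᵀ) ⬝ᵥ x := (Matrix.dotProduct_mulVec _ _ _)
      _ = (x ᵥ* (U * Uᵀ)) ⬝ᵥ x := by rw [Matrix.vecMul_vecMul]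
      _ = x ⬝ᵥ x := by rw [hUUt, Matrix.vecMul_one]

lemma quad_le {H : Matrix (Fin n) (Fin n) ℝ} (hH : H.IsHermitian) (x : Fin n → ℝ) :
    x ⬝ᵥ H *ᵥ x ≤ lmax hH * (x ⬝ᵥ x) := by
  obtain ⟨c, h1, h2⟩ := spectral_decomp hH x
  rw [h1, h2, Finset.mul_sum]
  refine Finset.sum_le_sum fun i _ => ?_
  have hle : hH.eigenvalues i ≤ lmax hH :=
    le_ciSup (Set.Finite.bddAbove (Set.finite_range _)) i
  exact mul_le_mul_of_nonneg_right hle (sq_nonneg _)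

lemma quad_ge {H : Matrix (Fin n) (Fin n) ℝ} (hH : H.IsHermitian) (x : Fin n → ℝ) :
    lmin hH * (x ⬝ᵥ x) ≤ x ⬝ᵥ H *ᵥ x := by
  obtain ⟨c, h1, h2⟩ := spectral_decomp hH x
  rw [h1, h2, Finset.mul_sum]
  refine Finset.sum_le_sum fun i _ => ?_
  have hle : lmin hH ≤ hH.eigenvalues i :=
    ciInf_le (Set.Finite.bddBelow (Set.finite_range _)) i
  exact mul_le_mul_of_nonneg_right hle (sq_nonneg _)

lemma symm_dp {S : Matrix (Fin n) (Fin n) ℝ} (hS : S.IsHermitian) (a b : Fin n → ℝ) :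
    a ⬝ᵥ S *ᵥ b = b ⬝ᵥ S *ᵥ a := by
  have hSt : Sᵀ = S := by
    rw [← Matrix.conjTranspose_eq_transpose_of_trivial]; exact hS
  rw [Matrix.dotProduct_mulVec, ← Matrix.mulVec_transpose, hSt, dotProduct_comm]

/-- Cauchy–Schwarz for the bilinear form of a positive semidefinite matrix. -/
lemma cs_psd {S : Matrix (Fin n) (Fin n) ℝ} (hS : S.PosSemidef) (a b : Fin n → ℝ) :
    (a ⬝ᵥ S *ᵥ b) ^ 2 ≤ (a ⬝ᵥ S *ᵥ a) * (b ⬝ᵥ S *ᵥ b) := by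
  have key : ∀ t : ℝ,
      0 ≤ (b ⬝ᵥ S *ᵥ b) * (t * t) + (2 * (a ⬝ᵥ S *ᵥ b)) * t + a ⬝ᵥ S *ᵥ a := by
    intro t
    have h := hS.dotProduct_mulVec_nonneg (a + t • b)
    have hstar : star (a + t • b) = a + t • b := by
      simp [star_trivial]
    rw [hstar] at h
    have hexp : (a + t • b) ⬝ᵥ S *ᵥ (a + t • b)
        = (b ⬝ᵥ S *ᵥ b) * (t * t) + (2 * (a ⬝ᵥ S *ᵥ b)) * t + a ⬝ᵥ S *ᵥ a := by
      simp only [Matrix.add_mulVec, Matrix.mulVec_add, Matrix.mulVec_smul,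
        dotProduct_add, add_dotProduct, smul_dotProduct,
        dotProduct_smul, smul_eq_mul, symm_dp hS.isHermitian b a]
      ring
    rw [hexp] at h
    exact h
  have hd := discrim_le_zero key
  rw [discrim] at hd
  nlinarith [hd]

end helpers

/-- Bound on the squared `L₂` norm of the first-order bias term
`B_m Σ_Z Aᵀ (A Σ_Z Aᵀ + I)⁻¹`, which is `O(1/p)`. -/
theorem first_order_bias_row_bound {M K p : ℕ} (hp : 0 < p) (hK : 0 < K)
    (B : Matrix (Fin M) (Fin K) ℝ) (A : Matrix (Fin p) (Fin K) ℝ)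
    (SZ : Matrix (Fin K) (Fin K) ℝ) (hSZ : SZ.PosDef) (hSZh : SZ.IsHermitian)
    (m : Fin M) (C₄ κA1 κA2 κZ2 : ℝ)
    (hC₄ : 0 < C₄) (hκA1 : 0 < κA1) (hκA2 : 0 < κA2) (hκZ2 : 0 < κZ2)
    (hrow : l2norm (B m) ≤ C₄)
    (hAtA : (Aᵀ * A).IsHermitian)
    (hmin : κA1 * p ≤ lmin hAtA)
    (hmax : lmax hAtA ≤ κA2 * p)
    (hZ : lmax hSZh ≤ κZ2) :
    (l2norm (Matrix.vecMul (B m) (SZ * Aᵀ * (A * SZ * Aᵀ + 1)⁻¹))) ^ 2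
      ≤ C₄ ^ 2 * κA2 * p / (1 / κZ2 + κA1 * p) ^ 2 := by
  classical
  have hp' : (0 : ℝ) < p := by exact_mod_cast hp
  set v : Fin K → ℝ := B m with hv
  set G : Matrix (Fin K) (Fin K) ℝ := Aᵀ * A with hG
  set Q : Matrix (Fin K) (Fin K) ℝ := SZ⁻¹ + G with hQdef
  have hGpsd : G.PosSemidef := by
    have h := Matrix.posSemidef_conjTranspose_mul_self A
    rwa [Matrix.conjTranspose_eq_transpose_of_trivial] at h
  have hQpd : Q.PosDef := hSZ.inv.add_posSemidef hGpsd
  have hPpsd : (A * SZ * Aᵀ).PosSemidef := by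
    have h := hSZ.posSemidef.mul_mul_conjTranspose_same A
    rwa [Matrix.conjTranspose_eq_transpose_of_trivial] at h
  have hPpd : (A * SZ * Aᵀ + 1).PosDef :=
    Matrix.PosDef.posSemidef_add hPpsd Matrix.PosDef.one
  have hSdet : IsUnit SZ.det := hSZ.det_pos.ne'.isUnit
  have hQdet : IsUnit Q.det := hQpd.det_pos.ne'.isUnit
  have hPdet : IsUnit (A * SZ * Aᵀ + 1).det := hPpd.det_pos.ne'.isUnit
  have hSinv : SZ⁻¹ * SZ = 1 := Matrix.nonsing_inv_mul SZ hSdet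
  have hQinv : Q⁻¹ * Q = 1 := Matrix.nonsing_inv_mul Q hQdet
  have hPinv : (A * SZ * Aᵀ + 1) * (A * SZ * Aᵀ + 1)⁻¹ = 1 :=
    Matrix.mul_nonsing_inv _ hPdet
  -- the key matrix identity
  have h1 : Q * (SZ * Aᵀ) = Aᵀ * (A * SZ * Aᵀ + 1) := by
    rw [hQdef, hG, Matrix.add_mul, Matrix.mul_add, Matrix.mul_one,
      ← Matrix.mul_assoc SZ⁻¹ SZ Aᵀ, hSinv, Matrix.one_mul, add_comm]
    congr 1
    simp only [Matrix.mul_assoc]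
  have key : SZ * Aᵀ * (A * SZ * Aᵀ + 1)⁻¹ = Q⁻¹ * Aᵀ := by
    have h2 : SZ * Aᵀ = Q⁻¹ * (Aᵀ * (A * SZ * Aᵀ + 1)) := by
      rw [← h1, ← Matrix.mul_assoc, hQinv, Matrix.one_mul]
    rw [h2]
    rw [show Q⁻¹ * (Aᵀ * (A * SZ * Aᵀ + 1)) * (A * SZ * Aᵀ + 1)⁻¹
        = Q⁻¹ * Aᵀ * ((A * SZ * Aᵀ + 1) * (A * SZ * Aᵀ + 1)⁻¹) by
      simp only [Matrix.mul_assoc]]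
    rw [hPinv, Matrix.mul_one]
  set u : Fin K → ℝ := v ᵥ* Q⁻¹ with hu
  have hAu : u ᵥ* Aᵀ = A *ᵥ u := Matrix.vecMul_transpose A u
  have hw : v ᵥ* (SZ * Aᵀ * (A * SZ * Aᵀ + 1)⁻¹) = A *ᵥ u := by
    rw [key, ← Matrix.vecMul_vecMul, ← hu, hAu]
  have hs0 : 0 ≤ u ⬝ᵥ u := by
    apply Finset.sum_nonneg
    exact fun i _ => mul_self_nonneg _
  have hww : (A *ᵥ u) ⬝ᵥ (A *ᵥ u) = u ⬝ᵥ G *ᵥ u := by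
    rw [hG, ← Matrix.mulVec_mulVec, Matrix.dotProduct_mulVec u Aᵀ (A *ᵥ u), hAu]
  have hvu : u ⬝ᵥ Q *ᵥ u = v ⬝ᵥ u := by
    rw [Matrix.dotProduct_mulVec]
    congr 1
    rw [hu, Matrix.vecMul_vecMul, hQinv, Matrix.vecMul_one]
  have hQsplit : u ⬝ᵥ Q *ᵥ u = u ⬝ᵥ SZ⁻¹ *ᵥ u + u ⬝ᵥ G *ᵥ u := by
    rw [hQdef, Matrix.add_mulVec, dotProduct_add]
  -- lower bound for the SZ⁻¹ quadratic form
  have hSinv_lb : 1 / κZ2 * (u ⬝ᵥ u) ≤ u ⬝ᵥ SZ⁻¹ *ᵥ u := by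
    set y : Fin K → ℝ := SZ⁻¹ *ᵥ u with hy
    have huy : SZ *ᵥ y = u := by
      rw [hy, Matrix.mulVec_mulVec, Matrix.mul_nonsing_inv _ hSdet, Matrix.one_mulVec]
    have ht0 : 0 ≤ u ⬝ᵥ y := by
      have h := hSZ.inv.posSemidef.dotProduct_mulVec_nonneg u
      rwa [star_trivial] at h
    have hcs := cs_psd hSZ.posSemidef u y
    have h1' : u ⬝ᵥ SZ *ᵥ y = u ⬝ᵥ u := by rw [huy]
    have h2' : y ⬝ᵥ SZ *ᵥ y = y ⬝ᵥ u := by rw [huy]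
    have h3' : u ⬝ᵥ SZ *ᵥ u ≤ κZ2 * (u ⬝ᵥ u) :=
      (quad_le hSZh u).trans (mul_le_mul_of_nonneg_right hZ hs0)
    rw [h1', h2'] at hcs
    rw [dotProduct_comm y u] at hcs
    rcases eq_or_lt_of_le hs0 with h | h
    · rw [← h]
      simpa using ht0
    · rw [div_mul_eq_mul_div, one_mul, div_le_iff₀ hκZ2]
      nlinarith [hcs, h3', ht0, h]
  have hGub : u ⬝ᵥ G *ᵥ u ≤ κA2 * p * (u ⬝ᵥ u) :=
    (quad_le hAtA u).trans (mul_le_mul_of_nonneg_right hmax hs0)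
  have hGlb : κA1 * p * (u ⬝ᵥ u) ≤ u ⬝ᵥ G *ᵥ u :=
    le_trans (mul_le_mul_of_nonneg_right hmin hs0) (quad_ge hAtA u)
  have hstep : (1 / κZ2 + κA1 * p) * (u ⬝ᵥ u) ≤ v ⬝ᵥ u := by
    rw [← hvu, hQsplit, add_mul]
    exact add_le_add hSinv_lb hGlb
  have hCS : (v ⬝ᵥ u) ^ 2 ≤ (v ⬝ᵥ v) * (u ⬝ᵥ u) := by
    have h := Finset.sum_mul_sq_le_sq_mul_sq Finset.univ v u
    simp only [dotProduct]
    calc (∑ i, v i * u i) ^ 2 ≤ (∑ i, v i ^ 2) * ∑ i, u i ^ 2 := h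
      _ = (∑ i, v i * v i) * ∑ i, u i * u i := by simp [sq]
  have hvv : v ⬝ᵥ v ≤ C₄ ^ 2 := by
    have h1' : v ⬝ᵥ v = (l2norm v) ^ 2 := by
      rw [l2norm, Real.sq_sqrt]
      · simp [dotProduct, sq]
      · exact Finset.sum_nonneg fun i _ => sq_nonneg _
    rw [h1']
    exact pow_le_pow_left₀ (Real.sqrt_nonneg _) hrow 2
  -- rewrite the goal
  have hαpos : 0 < 1 / κZ2 + κA1 * p :=
    add_pos (by positivity) (mul_pos hκA1 hp')
  have hlhs : (l2norm (Matrix.vecMul v (SZ * Aᵀ * (A * SZ * Aᵀ + 1)⁻¹))) ^ 2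
      = u ⬝ᵥ G *ᵥ u := by
    rw [show Matrix.vecMul v (SZ * Aᵀ * (A * SZ * Aᵀ + 1)⁻¹) = A *ᵥ u from hw]
    rw [l2norm, Real.sq_sqrt (Finset.sum_nonneg fun i _ => sq_nonneg _), ← hww]
    simp [dotProduct, sq]
  rw [hlhs]
  rw [le_div_iff₀ (by positivity)]
  rcases eq_or_lt_of_le hs0 with h | h
  · have h0 : u ⬝ᵥ G *ᵥ u ≤ 0 := by
      have := hGub; rw [← h] at this; simpa using this
    have hr : (0:ℝ) ≤ C₄ ^ 2 * κA2 * p :=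
      mul_nonneg (mul_nonneg (sq_nonneg _) hκA2.le) hp'.le
    have hl : u ⬝ᵥ G *ᵥ u * (1 / κZ2 + κA1 * p) ^ 2 ≤ 0 :=
      mul_nonpos_of_nonpos_of_nonneg h0 (sq_nonneg _)
    linarith
  · have hvu_pos : 0 < v ⬝ᵥ u := lt_of_lt_of_le (mul_pos hαpos h) hstep
    have hsq : ((1 / κZ2 + κA1 * p) * (u ⬝ᵥ u)) ^ 2 ≤ (v ⬝ᵥ u) ^ 2 := by
      apply pow_le_pow_left₀ (mul_nonneg hαpos.le hs0) hstep
    have hkey : (1 / κZ2 + κA1 * p) ^ 2 * (u ⬝ᵥ u) ≤ C₄ ^ 2 := by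
      have h2' : (1 / κZ2 + κA1 * p) ^ 2 * (u ⬝ᵥ u) ^ 2 ≤ C₄ ^ 2 * (u ⬝ᵥ u) := by
        calc (1 / κZ2 + κA1 * p) ^ 2 * (u ⬝ᵥ u) ^ 2
            = ((1 / κZ2 + κA1 * p) * (u ⬝ᵥ u)) ^ 2 := by ring
          _ ≤ (v ⬝ᵥ u) ^ 2 := hsq
          _ ≤ (v ⬝ᵥ v) * (u ⬝ᵥ u) := hCS
          _ ≤ C₄ ^ 2 * (u ⬝ᵥ u) := mul_le_mul_of_nonneg_right hvv hs0
      have h3 : ((1 / κZ2 + κA1 * p) ^ 2 * (u ⬝ᵥ u)) * (u ⬝ᵥ u) ≤ C₄ ^ 2 * (u ⬝ᵥ u) := by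
        rw [mul_assoc, ← sq]; exact h2'
      exact le_of_mul_le_mul_right h3 h
    calc u ⬝ᵥ G *ᵥ u * (1 / κZ2 + κA1 * p) ^ 2
        ≤ (κA2 * p * (u ⬝ᵥ u)) * (1 / κZ2 + κA1 * p) ^ 2 :=
          mul_le_mul_of_nonneg_right hGub (sq_nonneg _)
      _ = κA2 * p * ((1 / κZ2 + κA1 * p) ^ 2 * (u ⬝ᵥ u)) := by ring
      _ ≤ κA2 * p * C₄ ^ 2 :=
          mul_le_mul_of_nonneg_left hkey (mul_nonneg hκA2.le hp'.le)
      _ = C₄ ^ 2 * κA2 * p := by ring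
end
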